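/- Let 𝔊 be a finite group generated by a set of involutions (elements of order dividing 2). Then there exists a finite connected simple graph G with a proper edge coloring κ such that the coloring group 𝔊_κ is isomorphic to 𝔊. -/

import Mathlib

open scoped Classical

/-- A proper edge coloring of a finite simple graph `G` with colors `{1, …, k}`:
it assigns colors in `{1, …, k}` to edges, is surjective onto `{1, …, k}`, and
incident edges receive distinct colors. -/
def IsProperEdgeColoring {V : Type*} (G : SimpleGraph V) (k : ℕ) (κ : Sym2 V → ℕ) : Prop :=
  (∀ e ∈ G.edgeSet, κ e ∈ Finset.Icc 1 k) ∧
  (∀ a ∈ Finset.Icc 1 k, ∃ e ∈ G.edgeSet, κ e = a) ∧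
  (∀ u v w : V, G.Adj u v → G.Adj u w → v ≠ w → κ s(u, v) ≠ κ s(u, w))
/-- `IsToggle G κ a τ` says that the permutation `τ` is the product of the
transpositions `(i j)` over all edges `{i,j}` of `G` colored `a`: it swaps the two
endpoints of every edge colored `a` and fixes all other vertices. -/
def IsToggle {V : Type*} (G : SimpleGraph V) (κ : Sym2 V → ℕ) (a : ℕ) (τ : Equiv.Perm V) : Prop :=
  ∀ v w : V, v ≠ w → (τ v = w ↔ G.Adj v w ∧ κ s(v, w) = a)
/-- The coloring group `𝔊_κ`: the subgroup of `Sym(V)` generated by the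
permutations `τ_1, …, τ_k` associated to the colors `1, …, k`. -/
def coloringGroup {V : Type*} (G : SimpleGraph V) (k : ℕ) (κ : Sym2 V → ℕ) :
    Subgroup (Equiv.Perm V) :=
  Subgroup.closure { τ : Equiv.Perm V | ∃ a : ℕ, 1 ≤ a ∧ a ≤ k ∧ IsToggle G κ a τ }

section CayleyAux

variable {𝔊 : Type*} [Group 𝔊] {V : Type} (e : V ≃ 𝔊) (S' : Finset 𝔊)

/-- The Cayley graph of `𝔊` (transported to `V`) with connection set `S'`. -/
def cayGraph : SimpleGraph V where
  Adj i j := ((e i)⁻¹ * e j ∈ S' ∨ (e j)⁻¹ * e i ∈ S') ∧ i ≠ j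
  symm := by
    constructor
    rintro i j ⟨h, hne⟩
    exact ⟨h.symm, hne.symm⟩
  loopless := ⟨fun i h => h.2 rfl⟩

/-- Index (color) of a group element, via an enumeration of `S'`. -/
noncomputable def cayIdx (x : 𝔊) : ℕ :=
  if h : x ∈ S' then (S'.equivFin ⟨x, h⟩).val + 1 else 0

/-- The edge coloring of the Cayley graph. -/
noncomputable def cayCol : Sym2 V → ℕ :=
  Sym2.lift ⟨fun i j => max (cayIdx S' ((e i)⁻¹ * e j)) (cayIdx S' ((e j)⁻¹ * e i)),
    fun i j => max_comm _ _⟩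

theorem cayGraph_adj {i j : V} :
    (cayGraph e S').Adj i j ↔ ((e i)⁻¹ * e j ∈ S' ∨ (e j)⁻¹ * e i ∈ S') ∧ i ≠ j :=
  Iff.rfl

/-- Left translation as an automorphism of the Cayley graph. -/
def cayIso (x : 𝔊) : cayGraph e S' ≃g cayGraph e S' where
  toEquiv := e.trans ((Equiv.mulLeft x).trans e.symm)
  map_rel_iff' := by
    intro a b
    rw [cayGraph_adj, cayGraph_adj]
    have h1 : (e ((e.trans ((Equiv.mulLeft x).trans e.symm)) a))⁻¹ *
        e ((e.trans ((Equiv.mulLeft x).trans e.symm)) b) = (e a)⁻¹ * e b := by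
      simp [mul_assoc, mul_inv_rev]
    have h2 : (e ((e.trans ((Equiv.mulLeft x).trans e.symm)) b))⁻¹ *
        e ((e.trans ((Equiv.mulLeft x).trans e.symm)) a) = (e b)⁻¹ * e a := by
      simp [mul_assoc, mul_inv_rev]
    rw [h1, h2]
    constructor
    · rintro ⟨h, hne⟩
      refine ⟨h, fun hab => hne (by rw [hab])⟩
    · rintro ⟨h, hne⟩
      refine ⟨h, fun hab => hne ?_⟩
      have := (e.trans ((Equiv.mulLeft x).trans e.symm)).injective hab
      exact this

theorem cayIso_apply (x : 𝔊) (v : V) : (cayIso e S' x) v = e.symm (x * e v) := rfl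

end CayleyAux

theorem cay_main {𝔊 : Type*} [Group 𝔊] [Fintype 𝔊] (S : Set 𝔊)
    (hinv : ∀ g ∈ S, g * g = 1) (hgen : Subgroup.closure S = ⊤)
    {V : Type} (e : V ≃ 𝔊) :
    ∃ (G : SimpleGraph V) (k : ℕ) (κ : Sym2 V → ℕ),
      G.Connected ∧ IsProperEdgeColoring G k κ ∧
      Nonempty (↥(coloringGroup G k κ) ≃* 𝔊) := by
  classical
  set S' : Finset 𝔊 := Finset.univ.filter (fun s => s ∈ S ∧ s ≠ 1) with hS'def
  have hmem : ∀ {s : 𝔊}, s ∈ S' ↔ s ∈ S ∧ s ≠ 1 := by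
    intro s; simp [hS'def]
  have hone : (1 : 𝔊) ∉ S' := fun h => (hmem.mp h).2 rfl
  have hinv' : ∀ {s : 𝔊}, s ∈ S' → s⁻¹ = s := by
    intro s hs
    exact inv_eq_of_mul_eq_one_right (hinv s (hmem.mp hs).1)
  have hinvmem : ∀ {s : 𝔊}, s⁻¹ ∈ S' ↔ s ∈ S' := by
    intro s
    constructor
    · intro h
      have h2 : (s⁻¹)⁻¹ = s⁻¹ := hinv' h
      rw [inv_inv] at h2
      rw [h2]; exact h
    · intro h; rwa [hinv' h]
  -- generation by S'
  have hgen' : Subgroup.closure (↑S' : Set 𝔊) = ⊤ := by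
    rw [eq_top_iff, ← hgen]
    refine (Subgroup.closure_le _).mpr ?_
    intro s hs
    by_cases h1 : s = 1
    · subst h1; exact one_mem _
    · exact Subgroup.subset_closure (hmem.mpr ⟨hs, h1⟩)
  set k : ℕ := S'.card with hkdef
  set G : SimpleGraph V := cayGraph e S' with hGdef
  set κ : Sym2 V → ℕ := cayCol e S' with hκdef
  -- adjacency characterization
  have hAdj : ∀ i j : V, G.Adj i j ↔ (e i)⁻¹ * e j ∈ S' := by
    intro i j
    constructor
    · rintro ⟨h | h, hne⟩
      · exact h
      · have : ((e j)⁻¹ * e i)⁻¹ ∈ S' := hinvmem.mpr h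
        rwa [mul_inv_rev, inv_inv] at this
    · intro h
      refine ⟨Or.inl h, ?_⟩
      rintro rfl
      rw [inv_mul_cancel] at h
      exact hone h
  -- coloring on edges
  have hd : ∀ i j : V, (e j)⁻¹ * e i = ((e i)⁻¹ * e j)⁻¹ := by
    intro i j; rw [mul_inv_rev, inv_inv]
  have hκedge : ∀ (i j : V) (h : (e i)⁻¹ * e j ∈ S'),
      κ s(i, j) = (S'.equivFin ⟨(e i)⁻¹ * e j, h⟩).val + 1 := by
    intro i j h
    have h2 : (e j)⁻¹ * e i = (e i)⁻¹ * e j := by rw [hd, hinv' h]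
    show max (cayIdx S' ((e i)⁻¹ * e j)) (cayIdx S' ((e j)⁻¹ * e i)) = _
    rw [h2, max_self, cayIdx, dif_pos h]
  have hκedge' : ∀ (i j : V) (s : 𝔊) (hs : s ∈ S'), (e i)⁻¹ * e j = s →
      κ s(i, j) = (S'.equivFin ⟨s, hs⟩).val + 1 := by
    intro i j s hs hds
    subst hds
    exact hκedge i j hs
  -- connectivity
  have hNe : Nonempty V := ⟨e.symm 1⟩
  have hLapp : ∀ (x g : 𝔊), (cayIso e S' x).toHom (e.symm g) = e.symm (x * g) := by
    intro x g
    show (cayIso e S' x) (e.symm g) = _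
    rw [cayIso_apply, Equiv.apply_symm_apply]
  have hreach : ∀ g : 𝔊, G.Reachable (e.symm 1) (e.symm g) := by
    intro g
    have hg : g ∈ Subgroup.closure (↑S' : Set 𝔊) := by rw [hgen']; trivial
    induction hg using Subgroup.closure_induction with
    | mem s hs =>
      refine SimpleGraph.Adj.reachable ?_
      rw [hAdj]
      simpa using hs
    | one => exact SimpleGraph.Reachable.refl _
    | mul x y hx hy ihx ihy =>
      refine ihx.trans ?_
      have := ihy.map (cayIso e S' x).toHom
      rw [hLapp, hLapp, mul_one] at this
      exact this
    | inv x hx ihx =>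
      have := ihx.map (cayIso e S' x⁻¹).toHom
      rw [hLapp, hLapp, mul_one, inv_mul_cancel] at this
      exact this.symm
  have hconn : G.Connected := by
    refine ⟨fun i j => ?_⟩
    have h1 := hreach (e i)
    have h2 := hreach (e j)
    rw [Equiv.symm_apply_apply] at h1 h2
    exact h1.symm.trans h2
  -- properness
  have hproper : IsProperEdgeColoring G k κ := by
    refine ⟨?_, ?_, ?_⟩
    · intro ed
      induction ed using Sym2.ind with
      | _ i j =>
        intro hij
        rw [SimpleGraph.mem_edgeSet, hAdj] at hij
        rw [hκedge i j hij]
        have := (S'.equivFin ⟨(e i)⁻¹ * e j, hij⟩).isLt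
        simp only [Finset.mem_Icc]
        omega
    · intro a ha
      rw [Finset.mem_Icc] at ha
      obtain ⟨ha1, hak⟩ := ha
      set t : ↥S' := S'.equivFin.symm ⟨a - 1, by omega⟩ with htdef
      refine ⟨s(e.symm 1, e.symm ((t : 𝔊))), ?_, ?_⟩
      · rw [SimpleGraph.mem_edgeSet, hAdj]
        simpa using t.2
      · have hm : (e (e.symm 1))⁻¹ * e (e.symm (t : 𝔊)) ∈ S' := by simpa using t.2
        rw [hκedge _ _ hm]
        have : (⟨(e (e.symm 1))⁻¹ * e (e.symm (t : 𝔊)), hm⟩ : ↥S') = t := by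
          ext; simp
        rw [this, htdef, Equiv.apply_symm_apply]
        show a - 1 + 1 = a
        omega
    · intro u v w huv huw hvw
      rw [hAdj] at huv huw
      rw [hκedge _ _ huv, hκedge _ _ huw]
      intro hcontra
      have h1 : (S'.equivFin ⟨(e u)⁻¹ * e v, huv⟩) = (S'.equivFin ⟨(e u)⁻¹ * e w, huw⟩) := by
        apply Fin.val_injective; omega
      have h2 := S'.equivFin.injective h1
      have h3 : (e u)⁻¹ * e v = (e u)⁻¹ * e w := congrArg Subtype.val h2
      exact hvw (e.injective (mul_left_cancel h3))
  -- the homomorphism g ↦ (v ↦ e.symm (e v * g⁻¹))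
  set φ : 𝔊 →* Equiv.Perm V :=
    MonoidHom.mk' (fun g => (e.trans (Equiv.mulRight g⁻¹)).trans e.symm)
      (by
        intro a b
        ext v
        simp [mul_inv_rev, mul_assoc]) with hφdef
  have hφapp : ∀ (g : 𝔊) (v : V), φ g v = e.symm (e v * g⁻¹) := by
    intro g v; rfl
  have hφinj : Function.Injective φ := by
    refine (injective_iff_map_eq_one φ).mpr ?_
    intro g hg
    have h1 := DFunLike.congr_fun hg (e.symm 1)
    rw [hφapp] at h1
    simp only [Equiv.Perm.coe_one, id_eq, Equiv.apply_symm_apply, one_mul] at h1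
    have h2 := e.symm.injective h1
    rwa [inv_eq_one] at h2
  -- toggles
  have hT1 : ∀ (s : 𝔊) (hs : s ∈ S'),
      IsToggle G κ ((S'.equivFin ⟨s, hs⟩).val + 1) (φ s) := by
    intro s hs v w hvw
    constructor
    · intro h
      rw [hφapp, hinv' hs] at h
      have hew : e w = e v * s := by rw [← h, Equiv.apply_symm_apply]
      have hdv : (e v)⁻¹ * e w = s := by rw [hew, inv_mul_cancel_left]
      have hadj : G.Adj v w := by rw [hAdj, hdv]; exact hs
      exact ⟨hadj, hκedge' v w s hs hdv⟩
    · rintro ⟨hadj, hκa⟩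
      rw [hAdj] at hadj
      rw [hκedge v w hadj] at hκa
      have h1 : (S'.equivFin ⟨(e v)⁻¹ * e w, hadj⟩) = S'.equivFin ⟨s, hs⟩ := by
        apply Fin.val_injective; omega
      have h2 : (e v)⁻¹ * e w = s := congrArg Subtype.val (S'.equivFin.injective h1)
      rw [hφapp, hinv' hs, ← h2]
      simp
  have hT2 : ∀ (a : ℕ) (τ : Equiv.Perm V) (ha1 : 1 ≤ a) (hak : a ≤ k),
      IsToggle G κ a τ →
      τ = φ ((S'.equivFin.symm ⟨a - 1, by omega⟩ : ↥S') : 𝔊) := by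
    intro a τ ha1 hak ht
    set t : ↥S' := S'.equivFin.symm ⟨a - 1, by omega⟩ with htdef
    have hta : (S'.equivFin ⟨(t : 𝔊), t.2⟩).val + 1 = a := by
      have : (⟨(t : 𝔊), t.2⟩ : ↥S') = t := by ext; rfl
      rw [this, htdef, Equiv.apply_symm_apply]
      show a - 1 + 1 = a
      omega
    have htog : IsToggle G κ a (φ (t : 𝔊)) := by
      rw [← hta]; exact hT1 _ t.2
    ext v
    have hne : v ≠ φ (t : 𝔊) v := by
      intro h
      have h1 := congrArg e h
      rw [hφapp] at h1
      simp only [Equiv.apply_symm_apply] at h1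
      have h2 : (t : 𝔊)⁻¹ = 1 := by
        have h3 : e v * (t : 𝔊)⁻¹ = e v * 1 := by rw [mul_one, ← h1]
        exact mul_left_cancel h3
      have h4 : (t : 𝔊) = 1 := by rwa [inv_eq_one] at h2
      exact hone (h4 ▸ t.2)
    have hrhs := (htog v (φ (t : 𝔊) v) hne).mp rfl
    exact (ht v (φ (t : 𝔊) v) hne).mpr hrhs
  -- the toggle set is exactly φ '' S'
  have hTset : { τ : Equiv.Perm V | ∃ a : ℕ, 1 ≤ a ∧ a ≤ k ∧ IsToggle G κ a τ }
      = φ '' (↑S' : Set 𝔊) := by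
    ext τ
    constructor
    · rintro ⟨a, ha1, hak, ht⟩
      exact ⟨_, (S'.equivFin.symm ⟨a - 1, by omega⟩ : ↥S').2, (hT2 a τ ha1 hak ht).symm⟩
    · rintro ⟨s, hs, rfl⟩
      refine ⟨(S'.equivFin ⟨s, hs⟩).val + 1, by omega, ?_, hT1 s hs⟩
      have := (S'.equivFin ⟨s, hs⟩).isLt
      omega
  -- conclude
  have hcg : coloringGroup G k κ = φ.range := by
    rw [coloringGroup, hTset, ← MonoidHom.map_closure, hgen', ← MonoidHom.range_eq_map]
  refine ⟨G, k, κ, hconn, hproper, ⟨?_⟩⟩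
  exact (MulEquiv.subgroupCongr hcg).trans (MonoidHom.ofInjective hφinj).symm

/-- Every finite group generated by a set of involutions is isomorphic to
the coloring group of a proper edge coloring of some finite connected simple graph. -/
theorem stmt_0 (𝔊 : Type*) [Group 𝔊] [Fintype 𝔊] (S : Set 𝔊)
    (hinv : ∀ g ∈ S, g * g = 1) (hgen : Subgroup.closure S = ⊤) :
    ∃ (n : ℕ) (G : SimpleGraph (Fin n)) (k : ℕ) (κ : Sym2 (Fin n) → ℕ),
      G.Connected ∧ IsProperEdgeColoring G k κ ∧
      Nonempty (↥(coloringGroup G k κ) ≃* 𝔊) := by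
  exact ⟨Fintype.card 𝔊, cay_main S hinv hgen (Fintype.equivFin 𝔊).symm⟩
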